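/- If FV(S∘(AB)) is defined, then FV(S∘(AB)) = FV(S∘A) ⊔ FV(S∘B). -/

import Mathlib

abbrev Var := ℕ
abbrev Ctx := Finset Var × List Var

/-- `Γ,x` : extend the local part with `x` as innermost (rightmost) variable.
Lists represent local contexts with head = outermost (leftmost). -/
def Ctx.snoc (Γ : Ctx) (x : Var) : Ctx := (Γ.1, Γ.2 ++ [x])

/-- The least partial order on contexts generated by
`(G,L) < (G ∪ {x}, L)` for `x ∉ G` and `(G,L) < (G \ {x}, x::L)`. -/
inductive CtxLe : Ctx → Ctx → Prop
  | refl (Γ : Ctx) : CtxLe Γ Γ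
  | trans {Γ Δ Θ : Ctx} : CtxLe Γ Δ → CtxLe Δ Θ → CtxLe Γ Θ
  | glob (G : Finset Var) (L : List Var) (x : Var) (h : x ∉ G) :
      CtxLe (G, L) (insert x G, L)
  | loc (G : Finset Var) (L : List Var) (x : Var) :
      CtxLe (G, L) (G.erase x, x :: L)

def Compatible (Γ Δ : Ctx) : Prop := ∃ Θ, CtxLe Γ Θ ∧ CtxLe Δ Θ

/-- Auxiliary supremum on contexts whose local lists have head = innermost. -/
def supAux : Finset Var → List Var → Finset Var → List Var → Option (Finset Var × List Var)
  | G₁, [], G₂, [] => some (G₁ ∪ G₂, [])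
  | G₁, x :: l₁, G₂, [] =>
      (supAux G₁ l₁ (G₂.erase x) []).map fun p => (p.1, x :: p.2)
  | G₁, [], G₂, x :: l₂ =>
      (supAux (G₁.erase x) [] G₂ l₂).map fun p => (p.1, x :: p.2)
  | G₁, x :: l₁, G₂, y :: l₂ =>
      if x = y then (supAux G₁ l₁ G₂ l₂).map fun p => (p.1, x :: p.2) else none
  termination_by _ l₁ _ l₂ => l₁.length + l₂.length

/-- The (partial) supremum `Γ ⊔ Δ` of two contexts. -/
def ctxSup (Γ Δ : Ctx) : Option Ctx :=
  (supAux Γ.1 Γ.2.reverse Δ.1 Δ.2.reverse).map fun p => (p.1, p.2.reverse)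

/-- The partial operation `O_{λx}` : `O_{λx}(Γ,x) = Γ`, `O_{λx}(G, nil) = (G \ {x}, nil)`,
undefined otherwise. -/
def Olam (x : Var) (Γ : Ctx) : Option Ctx :=
  match Γ.2.reverse with
  | [] => some (Γ.1.erase x, [])
  | y :: l => if y = x then some (Γ.1, l.reverse) else none

mutual
/-- Terms of the calculus λα. -/
inductive Tm : Type
  | var : Var → Tm
  | app : Tm → Tm → Tm
  | lam : Var → Tm → Tm
  | sub : Sb → Tm → Tm
/-- Substitutions of the calculus λα: `[B/x]`, `Wx`, `{yx}`, `Sₓ`. -/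
inductive Sb : Type
  | push : Tm → Var → Sb
  | weak : Var → Sb
  | ren : Var → Var → Sb
  | lift : Sb → Var → Sb
end

mutual
/-- The typing judgement `Γ ⊢ A` of λα (rules R1–R6). -/
inductive Judg : Ctx → Tm → Prop
  | r1 {G : Finset Var} {x : Var} (h : x ∈ G) : Judg (G, []) (.var x)
  | r2 (Γ : Ctx) (x : Var) : Judg (Γ.snoc x) (.var x)
  | r3 {Γ : Ctx} {x y : Var} (h : x ≠ y) : Judg Γ (.var x) → Judg (Γ.snoc y) (.var x)
  | r4 {Γ A B} : Judg Γ A → Judg Γ B → Judg Γ (.app A B)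
  | r5 {Γ x A} : Judg (Ctx.snoc Γ x) A → Judg Γ (.lam x A)
  | r6 {Γ Δ S A} : SJudg Γ S Δ → Judg Δ A → Judg Γ (.sub S A)
/-- The judgement `Γ ⊢ S ▷ Δ` of λα (rules R7–R10). -/
inductive SJudg : Ctx → Sb → Ctx → Prop
  | r7 {Γ B x} : Judg Γ B → SJudg Γ (.push B x) (Γ.snoc x)
  | r8 (Γ x) : SJudg (Ctx.snoc Γ x) (.weak x) Γ
  | r9 (Γ y x) : SJudg (Ctx.snoc Γ y) (.ren y x) (Ctx.snoc Γ x)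
  | r10 {Γ Δ S} (x) : SJudg Γ S Δ → SJudg (Ctx.snoc Γ x) (.lift S x) (Ctx.snoc Δ x)
end

mutual
/-- Weight of a term, used for the termination of `FV`. -/
def wT : Tm → ℕ
  | .var _ => 1
  | .app a b => wT a + wT b + 1
  | .lam _ a => wT a + 1
  | .sub s a => wS s + wT a
/-- Weight of a substitution, used for the termination of `FV`. -/
def wS : Sb → ℕ
  | .weak _ => 1
  | .push b _ => wT b + 4
  | .ren _ _ => 4
  | .lift s _ => wS s + 3
end

/-- The partial free-variable function of λα, valued in contexts. -/
def FV : Tm → Option Ctx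
  | .var x => some ({x}, [])
  | .app A B => do ctxSup (← FV A) (← FV B)
  | .lam x A => do Olam x (← FV A)
  | .sub (.weak x) A => (FV A).map (fun Γ => Ctx.snoc Γ x)
  | .sub (.push B x) A => FV (.app (.lam x A) B)
  | .sub (.ren y x) A => FV (.sub (.weak y) (.lam x A))
  | .sub (.lift S x) A => FV (.sub (.weak x) (.sub S (.lam x A)))
  termination_by t => wT t
  decreasing_by all_goals simp [wT, wS] <;> omega


namespace FVSubApp

open List

/-- Closed form of `supAux`. -/
def supFun (G₁ : Finset Var) (l₁ : List Var) (G₂ : Finset Var) (l₂ : List Var) :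
    Option (Finset Var × List Var) :=
  if l₁ <+: l₂ then some ((G₁ \ (l₂.drop l₁.length).toFinset) ∪ G₂, l₂)
  else if l₂ <+: l₁ then some (G₁ ∪ (G₂ \ (l₁.drop l₂.length).toFinset), l₁)
  else none

lemma erase_sdiff_cons (G : Finset Var) (x : Var) (t : List Var) :
    (G.erase x) \ t.toFinset = G \ (x :: t).toFinset := by
  ext v; simp [and_assoc]; tauto

lemma prefix_antisymm {l₁ l₂ : List Var} (h1 : l₁ <+: l₂) (h2 : l₂ <+: l₁) : l₁ = l₂ :=
  List.IsPrefix.eq_of_length h1 (le_antisymm h1.length_le h2.length_le)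

lemma not_cons_prefix_nil (x : Var) (l : List Var) : ¬ (x :: l <+: []) := by
  intro h; simpa using h.length_le

lemma supFun_nil_left' (G₁ G₂ : Finset Var) (l : List Var) :
    supFun G₁ [] G₂ l = some (G₁ \ l.toFinset ∪ G₂, l) := by
  unfold supFun
  split_ifs with h1 h2
  · simp
  · have : l = [] := List.prefix_nil.mp h2
    subst this; simp
  · exact absurd (List.nil_prefix) h1

lemma supFun_nil_right' (G₁ G₂ : Finset Var) (l : List Var) :
    supFun G₁ l G₂ [] = some (G₁ ∪ G₂ \ l.toFinset, l) := by
  unfold supFun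
  split_ifs with h1 h2
  · have : l = [] := List.prefix_nil.mp h1
    subst this; simp
  · simp
  · exact absurd (List.nil_prefix) h2

lemma supFun_cons_cons_same (G₁ G₂ : Finset Var) (x : Var) (l₁ l₂ : List Var) :
    supFun G₁ (x :: l₁) G₂ (x :: l₂) = (supFun G₁ l₁ G₂ l₂).map fun p => (p.1, x :: p.2) := by
  unfold supFun
  simp only [List.cons_prefix_cons, true_and, List.length_cons, List.drop_succ_cons]
  split_ifs with h1 h2 <;> simp

lemma supFun_cons_cons_ne (G₁ G₂ : Finset Var) {x y : Var} (hxy : x ≠ y) (l₁ l₂ : List Var) :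
    supFun G₁ (x :: l₁) G₂ (y :: l₂) = none := by
  unfold supFun
  have h1 : ¬ (x :: l₁ <+: y :: l₂) := by rw [List.cons_prefix_cons]; tauto
  have h2 : ¬ (y :: l₂ <+: x :: l₁) := by
    rw [List.cons_prefix_cons]; intro h; exact hxy h.1.symm
  simp [h1, h2]

lemma supAux_nil_left (G₁ G₂ : Finset Var) (l₂ : List Var) :
    supAux G₁ [] G₂ l₂ = supFun G₁ [] G₂ l₂ := by
  induction l₂ generalizing G₁ with
  | nil => simp [supAux, supFun]
  | cons x l ih =>
      rw [supAux, ih, supFun_nil_left', supFun_nil_left', Option.map_some]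
      rw [erase_sdiff_cons]

lemma supAux_eq (G₁ : Finset Var) (l₁ : List Var) (G₂ : Finset Var) (l₂ : List Var) :
    supAux G₁ l₁ G₂ l₂ = supFun G₁ l₁ G₂ l₂ := by
  induction l₁ generalizing G₁ G₂ l₂ with
  | nil => exact supAux_nil_left G₁ G₂ l₂
  | cons x l ih =>
      cases l₂ with
      | nil =>
          rw [supAux, ih, supFun_nil_right', supFun_nil_right', Option.map_some]
          rw [erase_sdiff_cons]
      | cons y l₂ =>
          rw [supAux]
          by_cases hxy : x = y
          · subst hxy
            rw [if_pos rfl, ih, supFun_cons_cons_same]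
          · rw [if_neg hxy, supFun_cons_cons_ne G₁ G₂ hxy]

lemma supFun_eq_some_iff {G₁ G₂ G : Finset Var} {l₁ l₂ l : List Var} :
    supFun G₁ l₁ G₂ l₂ = some (G, l) ↔
      l₁ <+: l ∧ l₂ <+: l ∧ (l = l₁ ∨ l = l₂) ∧
        G = (G₁ \ (l.drop l₁.length).toFinset) ∪ (G₂ \ (l.drop l₂.length).toFinset) := by
  unfold supFun
  split_ifs with h1 h2
  · constructor
    · rintro h
      injection h with h; injection h with hG hl
      subst hl; subst hG
      exact ⟨h1, List.prefix_refl _, Or.inr rfl, by simp [List.drop_length]⟩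
    · rintro ⟨p1, p2, h3, rfl⟩
      rcases h3 with rfl | rfl
      · obtain rfl := prefix_antisymm h1 p2
        simp [List.drop_length]
      · simp [List.drop_length]
  · constructor
    · rintro h
      injection h with h; injection h with hG hl
      subst hl; subst hG
      exact ⟨List.prefix_refl _, h2, Or.inl rfl, by simp [List.drop_length]⟩
    · rintro ⟨p1, p2, h3, rfl⟩
      rcases h3 with rfl | rfl
      · simp [List.drop_length]
      · exact absurd p1 h1
  · constructor
    · intro h; simp at h
    · rintro ⟨p1, p2, h3, rfl⟩
      rcases h3 with rfl | rfl
      · exact absurd p2 h2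
      · exact absurd p1 h1

lemma supFun_some {G₁ G₂ : Finset Var} {l₁ l₂ l : List Var}
    (p1 : l₁ <+: l) (p2 : l₂ <+: l) (h3 : l = l₁ ∨ l = l₂) :
    supFun G₁ l₁ G₂ l₂ =
      some ((G₁ \ (l.drop l₁.length).toFinset) ∪ (G₂ \ (l.drop l₂.length).toFinset), l) :=
  supFun_eq_some_iff.mpr ⟨p1, p2, h3, rfl⟩

lemma sdiff_drop_trans {la lm le : List Var} (h1 : la <+: lm) (h2 : lm <+: le)
    (X : Finset Var) :
    (X \ (lm.drop la.length).toFinset) \ (le.drop lm.length).toFinset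
      = X \ (le.drop la.length).toFinset := by
  obtain ⟨t, rfl⟩ := h2
  rw [List.drop_append_of_le_length h1.length_le, List.drop_left]
  ext v
  simp only [Finset.mem_sdiff, List.mem_toFinset, List.mem_append, not_or]
  tauto

/-- `Olam` in innermost-first coordinates. -/
def rOlam (x : Var) (G : Finset Var) : List Var → Option (Finset Var × List Var)
  | [] => some (G.erase x, [])
  | y :: t => if y = x then some (G, t) else none

lemma Olam_eq (x : Var) (Γ : Ctx) :
    Olam x Γ = (rOlam x Γ.1 Γ.2.reverse).map (fun p => (p.1, p.2.reverse)) := by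
  unfold Olam
  rcases h : Γ.2.reverse with _ | ⟨y, t⟩
  · simp [rOlam]
  · by_cases hyx : y = x <;> simp [rOlam, hyx]

lemma prefix_cons_cases {l₁ : List Var} {y : Var} {t : List Var} (h : l₁ <+: y :: t) :
    l₁ = [] ∨ ∃ t₁, l₁ = y :: t₁ ∧ t₁ <+: t := by
  cases l₁ with
  | nil => exact Or.inl rfl
  | cons z t₁ =>
      obtain ⟨hz, ht⟩ := List.cons_prefix_cons.mp h
      exact Or.inr ⟨t₁, by rw [hz], ht⟩

lemma rOlam_sup {x : Var} {G₁ G₂ G G' : Finset Var} {l₁ l₂ l l' : List Var}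
    (hs : supFun G₁ l₁ G₂ l₂ = some (G, l))
    (ho : rOlam x G l = some (G', l')) :
    ∃ p q, rOlam x G₁ l₁ = some p ∧ rOlam x G₂ l₂ = some q ∧
      supFun p.1 p.2 q.1 q.2 = some (G', l') := by
  rw [supFun_eq_some_iff] at hs
  obtain ⟨h1, h2, h3, rfl⟩ := hs
  cases l with
  | nil =>
      have e1 : l₁ = [] := List.prefix_nil.mp h1
      have e2 : l₂ = [] := List.prefix_nil.mp h2
      subst e1; subst e2
      simp only [rOlam, Option.some_inj] at ho
      injection ho with hG hl
      subst hl; subst hG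
      refine ⟨(G₁.erase x, []), (G₂.erase x, []), rfl, rfl, ?_⟩
      rw [supFun_some (List.prefix_refl _) (List.prefix_refl _) (Or.inl rfl)]
      simp [Finset.erase_union_distrib]
  | cons y t =>
      simp only [rOlam] at ho
      by_cases hyx : y = x
      · rw [if_pos hyx] at ho
        injection ho with ho; injection ho with hG hl
        subst hl; subst hG
        rcases prefix_cons_cases h1 with rfl | ⟨t₁, rfl, ht₁⟩
        · rcases prefix_cons_cases h2 with rfl | ⟨t₂, rfl, ht₂⟩
          · rcases h3 with h3 | h3 <;> exact absurd h3 (by simp)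
          · have e : t = t₂ := by
              rcases h3 with h3 | h3
              · exact absurd h3 (by simp)
              · injection h3
            subst e
            refine ⟨(G₁.erase x, []), (G₂, t), rfl, by simp [rOlam, hyx], ?_⟩
            rw [supFun_some (List.nil_prefix) (List.prefix_refl _) (Or.inr rfl)]
            simp only [List.length_nil, List.drop_zero, List.drop_length,
              List.toFinset_nil, Finset.sdiff_empty, List.length_cons,
              List.drop_succ_cons, List.drop_length]
            rw [erase_sdiff_cons, hyx]
        · rcases prefix_cons_cases h2 with rfl | ⟨t₂, rfl, ht₂⟩
          · have e : t = t₁ := by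
              rcases h3 with h3 | h3
              · injection h3
              · exact absurd h3 (by simp)
            subst e
            refine ⟨(G₁, t), (G₂.erase x, []), by simp [rOlam, hyx], rfl, ?_⟩
            rw [supFun_some (List.prefix_refl _) (List.nil_prefix) (Or.inl rfl)]
            simp only [List.length_nil, List.drop_zero, List.drop_length,
              List.toFinset_nil, Finset.sdiff_empty, List.length_cons,
              List.drop_succ_cons, List.drop_length]
            rw [erase_sdiff_cons, hyx]
          · have e : t = t₁ ∨ t = t₂ := by
              rcases h3 with h3 | h3
              · left; injection h3
              · right; injection h3
            refine ⟨(G₁, t₁), (G₂, t₂), by simp [rOlam, hyx], by simp [rOlam, hyx], ?_⟩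
            rw [supFun_some ht₁ ht₂ e]
            simp
      · rw [if_neg hyx] at ho
        exact absurd ho (by simp)

set_option maxHeartbeats 1000000 in
lemma supFun_sup {Ga Gb Gc Gab Ge : Finset Var} {la lb lc lab le : List Var}
    (h1 : supFun Ga la Gb lb = some (Gab, lab))
    (h2 : supFun Gab lab Gc lc = some (Ge, le)) :
    ∃ p q, supFun Ga la Gc lc = some p ∧ supFun Gb lb Gc lc = some q ∧
      supFun p.1 p.2 q.1 q.2 = some (Ge, le) := by
  rw [supFun_eq_some_iff] at h1 h2
  obtain ⟨ha, hb, hab, rfl⟩ := h1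
  obtain ⟨habe, hc, he, rfl⟩ := h2
  have ha' : la <+: le := ha.trans habe
  have hb' : lb <+: le := hb.trans habe
  have key : ∀ (X Y : Finset Var) (lx ly : List Var), lx <+: le → ly <+: le →
      ∃ lz, (lz = lx ∨ lz = ly) ∧ lx <+: lz ∧ ly <+: lz ∧ lz <+: le ∧
        supFun X lx Y ly =
          some ((X \ (lz.drop lx.length).toFinset) ∪ (Y \ (lz.drop ly.length).toFinset), lz) := by
    intro X Y lx ly hx hy
    rcases List.prefix_or_prefix_of_prefix hx hy with h | h
    · exact ⟨ly, Or.inr rfl, h, List.prefix_refl _, hy,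
        supFun_some h (List.prefix_refl _) (Or.inr rfl)⟩
    · exact ⟨lx, Or.inl rfl, List.prefix_refl _, h, hx,
        supFun_some (List.prefix_refl _) h (Or.inl rfl)⟩
  obtain ⟨lp, hpor, hap, hcp, hpe, hP⟩ := key Ga Gc la lc ha' hc
  obtain ⟨lq, hqor, hbq, hcq, hqe, hQ⟩ := key Gb Gc lb lc hb' hc
  refine ⟨_, _, hP, hQ, ?_⟩
  have hle : le = lp ∨ le = lq := by
    rcases he with rfl | rfl
    · rcases hab with rfl | rfl
      · left; exact prefix_antisymm hap hpe
      · right; exact prefix_antisymm hbq hqe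
    · left; exact prefix_antisymm hcp hpe
  rw [supFun_eq_some_iff]
  refine ⟨hpe, hqe, hle, ?_⟩
  rw [Finset.union_sdiff_distrib, Finset.union_sdiff_distrib, Finset.union_sdiff_distrib,
    sdiff_drop_trans ha habe, sdiff_drop_trans hb habe,
    sdiff_drop_trans hap hpe, sdiff_drop_trans hcp hpe,
    sdiff_drop_trans hbq hqe, sdiff_drop_trans hcq hqe]
  ext v
  simp only [Finset.mem_union, Finset.mem_sdiff]
  tauto

/-! ### Top-level versions -/

lemma ctxSup_some_iff {Γ Δ Θ : Ctx} :
    ctxSup Γ Δ = some Θ ↔ supFun Γ.1 Γ.2.reverse Δ.1 Δ.2.reverse = some (Θ.1, Θ.2.reverse) := by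
  unfold ctxSup
  rw [supAux_eq]
  constructor
  · intro h
    rcases Option.map_eq_some_iff.mp h with ⟨p, hp, hpe⟩
    rw [hp]
    cases Θ
    injection hpe with h1 h2
    subst h1; subst h2
    simp
  · intro h
    rw [h]
    cases Θ
    simp

lemma Olam_ctxSup {x : Var} {Γ Δ Θ Θ' : Ctx}
    (hs : ctxSup Γ Δ = some Θ) (ho : Olam x Θ = some Θ') :
    ∃ Γ' Δ', Olam x Γ = some Γ' ∧ Olam x Δ = some Δ' ∧ ctxSup Γ' Δ' = some Θ' := by
  rw [ctxSup_some_iff] at hs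
  rw [Olam_eq] at ho
  rcases Option.map_eq_some_iff.mp ho with ⟨p, hp, hpe⟩
  obtain ⟨a, b, hA, hB, hsup⟩ := rOlam_sup hs (by simpa using hp)
  refine ⟨(a.1, a.2.reverse), (b.1, b.2.reverse), ?_, ?_, ?_⟩
  · rw [Olam_eq, hA]; rfl
  · rw [Olam_eq, hB]; rfl
  · rw [ctxSup_some_iff]
    simp only [List.reverse_reverse]
    rw [← hpe]
    simpa using hsup

lemma ctxSup_ctxSup {A B C AB E : Ctx}
    (h1 : ctxSup A B = some AB) (h2 : ctxSup AB C = some E) :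
    ∃ P Q, ctxSup A C = some P ∧ ctxSup B C = some Q ∧ ctxSup P Q = some E := by
  rw [ctxSup_some_iff] at h1 h2
  obtain ⟨p, q, hP, hQ, hsup⟩ := supFun_sup h1 h2
  refine ⟨(p.1, p.2.reverse), (q.1, q.2.reverse), ?_, ?_, ?_⟩
  · rw [ctxSup_some_iff]; simpa using hP
  · rw [ctxSup_some_iff]; simpa using hQ
  · rw [ctxSup_some_iff]
    simp only [List.reverse_reverse]
    exact hsup

lemma ctxSup_snoc {Γ Δ Θ : Ctx} (x : Var) (h : ctxSup Γ Δ = some Θ) :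
    ctxSup (Γ.snoc x) (Δ.snoc x) = some (Θ.snoc x) := by
  rw [ctxSup_some_iff] at h ⊢
  unfold Ctx.snoc
  simp only [List.reverse_append, List.reverse_cons, List.reverse_nil, List.nil_append,
    List.cons_append]
  rw [supFun_cons_cons_same, h]
  rfl

/-! ### The operator `opS` and the master lemma -/

/-- For each substitution `S`, the operation on contexts computing `FV(S∘M)` from `FV(M)`. -/
def opS : Sb → Ctx → Option Ctx
  | .weak x, Γ => some (Γ.snoc x)
  | .push B x, Γ => do ctxSup (← Olam x Γ) (← FV B)
  | .ren y x, Γ => (Olam x Γ).map (·.snoc y)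
  | .lift S x, Γ => ((Olam x Γ) >>= opS S).map (·.snoc x)

theorem FV_sub : ∀ (S : Sb) (M : Tm), FV (.sub S M) = FV M >>= opS S
  | .push B x, M => by
      simp only [FV]
      cases FV M <;> simp [opS]
  | .weak x, M => by
      simp only [FV]
      cases FV M <;> simp [opS, Option.map_eq_bind]
  | .ren y x, M => by
      simp only [FV]
      cases FV M <;> simp [opS]
  | .lift S x, M => by
      simp only [FV]
      rw [FV_sub S (.lam x M)]
      simp only [FV]
      cases FV M <;> simp [opS]

theorem opS_sup : ∀ (S : Sb) {Γ Δ Θ Φ : Ctx},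
    ctxSup Γ Δ = some Θ → opS S Θ = some Φ →
    ∃ Φa Φb, opS S Γ = some Φa ∧ opS S Δ = some Φb ∧ ctxSup Φa Φb = some Φ
  | .weak x, Γ, Δ, Θ, Φ, hs, h => by
      simp only [opS, Option.some_inj] at h
      subst h
      exact ⟨_, _, rfl, rfl, ctxSup_snoc x hs⟩
  | .ren y x, Γ, Δ, Θ, Φ, hs, h => by
      simp only [opS] at h ⊢
      rcases Option.map_eq_some_iff.mp h with ⟨Θ', hΘ', rfl⟩
      obtain ⟨Γ', Δ', hΓ', hΔ', hsup⟩ := Olam_ctxSup hs hΘ'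
      exact ⟨_, _, by rw [hΓ']; rfl, by rw [hΔ']; rfl, ctxSup_snoc y hsup⟩
  | .push B x, Γ, Δ, Θ, Φ, hs, h => by
      simp only [opS] at h ⊢
      rcases hO : Olam x Θ with _ | Θ'
      · rw [hO] at h; simp at h
      · rw [hO] at h
        rcases hB : FV B with _ | b
        · rw [hB] at h; simp at h
        · rw [hB] at h
          simp at h
          obtain ⟨Γ', Δ', hΓ', hΔ', hsup⟩ := Olam_ctxSup hs hO
          obtain ⟨P, Q, hP, hQ, hPQ⟩ := ctxSup_ctxSup hsup h
          exact ⟨P, Q, by rw [hΓ']; simpa using hP, by rw [hΔ']; simpa using hQ, hPQ⟩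
  | .lift S x, Γ, Δ, Θ, Φ, hs, h => by
      simp only [opS] at h ⊢
      rcases Option.map_eq_some_iff.mp h with ⟨Ψ, hΨ, rfl⟩
      rcases hO : Olam x Θ with _ | Θ'
      · rw [hO] at hΨ; simp at hΨ
      · rw [hO] at hΨ
        simp at hΨ
        obtain ⟨Γ', Δ', hΓ', hΔ', hsup⟩ := Olam_ctxSup hs hO
        obtain ⟨Φa, Φb, ha, hb, hab⟩ := opS_sup S hsup hΨ
        refine ⟨Φa.snoc x, Φb.snoc x, ?_, ?_, ctxSup_snoc x hab⟩
        · rw [hΓ']; simp [ha]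
        · rw [hΔ']; simp [hb]

end FVSubApp

/-- If `FV(S∘(AB))` is defined then `FV(S∘(AB)) = FV(S∘A) ⊔ FV(S∘B)`. -/
theorem FV_sub_app (S : Sb) (A B : Tm) (Φ : Ctx)
    (h : FV (.sub S (.app A B)) = some Φ) :
    ∃ Φa Φb : Ctx, FV (.sub S A) = some Φa ∧ FV (.sub S B) = some Φb ∧
      ctxSup Φa Φb = some Φ := by
  rw [FVSubApp.FV_sub] at h
  rw [show FV (.app A B) = do ctxSup (← FV A) (← FV B) from by rw [FV]] at h
  rcases hA : FV A with _ | a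
  · rw [hA] at h; simp at h
  · rw [hA] at h
    rcases hB : FV B with _ | b
    · rw [hB] at h; simp at h
    · rw [hB] at h
      simp at h
      rcases hS : ctxSup a b with _ | θ
      · rw [hS] at h; simp at h
      · rw [hS] at h
        simp at h
        obtain ⟨Φa, Φb, ha, hb, hab⟩ := FVSubApp.opS_sup S hS h
        exact ⟨Φa, Φb, by rw [FVSubApp.FV_sub, hA]; simpa using ha,
          by rw [FVSubApp.FV_sub, hB]; simpa using hb, hab⟩
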